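/- Let $\mathbf{C}$ be an origin-symmetric convex body in $\mathbb{E}^d$, $\rho\geq 1$, and suppose $n \geq \frac{4^d\,\delta_{\rm sep}(\rho,\mathbf{C})\,\rho^d R(\mathbf{C})^d}{r(\mathbf{C})^d}$. Then, writing $R=R_{\mathbf{C}}(\rho,n)$ and $t=R+2\rho R(\mathbf{C})$, one has $R+\rho R(\mathbf{C}) \leq \left(\frac{\mathrm{vol}_d(\mathbf{C})\,n}{\delta_{\rm sep}(\rho,\mathbf{C})\,\kappa_d}\right)^{1/d}\left(1+\frac{2\,\delta_{\rm sep}(\rho,\mathbf{C})^{1/d}\,\rho R(\mathbf{C})}{r(\mathbf{C})}\cdot\frac{1}{n^{1/d}}\right)$. -/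

import Mathlib

open MeasureTheory Filter Set Pointwise

noncomputable section

abbrev Euc (d : ℕ) := EuclideanSpace ℝ (Fin d)

/-- A convex body: compact convex set with nonempty interior. -/
def IsConvexBody {d : ℕ} (K : Set (Euc d)) : Prop :=
  IsCompact K ∧ Convex ℝ K ∧ (interior K).Nonempty

/-- The translate `c + C` of a set `C`. -/
def translateBody {d : ℕ} (c : Euc d) (C : Set (Euc d)) : Set (Euc d) := (c + ·) '' C

/-- Inradius: radius of the largest ball contained in `K`. -/
def inradius {d : ℕ} (K : Set (Euc d)) : ℝ :=
  sSup {r : ℝ | ∃ p, Metric.closedBall p r ⊆ K}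

/-- Circumradius of an origin-symmetric body: smallest radius of an origin-centered
ball containing `C`. -/
def circumradius {d : ℕ} (C : Set (Euc d)) : ℝ :=
  sInf {R : ℝ | 0 ≤ R ∧ C ⊆ Metric.closedBall 0 R}

/-- Volume of the `n`-dimensional Euclidean unit ball. -/
def kappa (n : ℕ) : ℝ := (volume (Metric.closedBall (0 : Euc n) 1)).toReal

/-- The axis-parallel cube of edge length `2·lam` centered at the origin. -/
def cubeW (d : ℕ) (lam : ℝ) : Set (Euc d) := {x | ∀ k, |x k| ≤ lam}

/-- A translative packing of `C` with set of centers `Λ`: translates have pairwise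
disjoint interiors. -/
def IsPacking {d : ℕ} (C : Set (Euc d)) (Λ : Set (Euc d)) : Prop :=
  Λ.Pairwise fun a b => Disjoint (interior (translateBody a C)) (interior (translateBody b C))

/-- `A` and `B` are separated by a hyperplane disjoint from the interior of every
member of the family `F`. -/
def SeparatedByHyperplane {d : ℕ} (A B : Set (Euc d)) (F : Set (Set (Euc d))) : Prop :=
  ∃ (f : Euc d →L[ℝ] ℝ) (t : ℝ), f ≠ 0 ∧ (∀ x ∈ A, f x ≤ t) ∧ (∀ x ∈ B, t ≤ f x) ∧
    ∀ S ∈ F, ∀ x ∈ interior S, f x ≠ t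

/-- A family of sets is totally separable if any two of its members can be separated
by a hyperplane disjoint from the interiors of all members. -/
def TotallySeparable {d : ℕ} (F : Set (Set (Euc d))) : Prop :=
  ∀ A ∈ F, ∀ B ∈ F, A ≠ B → SeparatedByHyperplane A B F

/-- A `ρ`-separable packing: a translative packing such that for each center `c`,
the sub-packing of translates contained in `c + ρ•C` is totally separable. -/
def IsSepPacking {d : ℕ} (ρ : ℝ) (C : Set (Euc d)) (Λ : Set (Euc d)) : Prop :=
  IsPacking C Λ ∧ ∀ c ∈ Λ,
    TotallySeparable {S | ∃ c' ∈ Λ, S = translateBody c' C ∧ S ⊆ translateBody c (ρ • C)}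

/-- Upper density of the packing with centers `Λ`, computed over growing cubes. -/
def packDensity {d : ℕ} (C Λ : Set (Euc d)) : ℝ :=
  limsup (fun lam : ℝ =>
    (volume (⋃ c ∈ {c ∈ Λ | translateBody c C ⊆ cubeW d lam}, translateBody c C)).toReal
      / (volume (cubeW d lam)).toReal) atTop

/-- Optimal density of translative packings of `C`. -/
def deltaPack {d : ℕ} (C : Set (Euc d)) : ℝ :=
  sSup {x | ∃ Λ, IsPacking C Λ ∧ x = packDensity C Λ}

/-- Optimal density of totally separable translative packings of `C`. -/
def deltaSepTotal {d : ℕ} (C : Set (Euc d)) : ℝ :=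
  sSup {x | ∃ Λ, IsPacking C Λ ∧ TotallySeparable ((translateBody · C) '' Λ) ∧
    x = packDensity C Λ}

/-- Optimal density of `ρ`-separable translative packings of `C`. -/
def deltaSep {d : ℕ} (ρ : ℝ) (C : Set (Euc d)) : ℝ :=
  sSup {x | ∃ Λ, IsSepPacking ρ C Λ ∧ x = packDensity C Λ}

/-- A finite `ρ`-separable packing of translates of `C` with centers `c i`. -/
def IsFinSepPacking {d : ℕ} (ρ : ℝ) (C : Set (Euc d)) {n : ℕ} (c : Fin n → Euc d) : Prop :=
  (∀ i j, i ≠ j → Disjoint (interior (translateBody (c i) C)) (interior (translateBody (c j) C))) ∧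
  ∀ i, TotallySeparable {S | ∃ j, S = translateBody (c j) C ∧ S ⊆ translateBody (c i) (ρ • C)}

/-- The largest `n` such that some `ρ`-separable packing of `n` translates of `C`
has all centers in `K`. -/
def nuSep {d : ℕ} (ρ : ℝ) (C K : Set (Euc d)) : ℕ :=
  sSup {n : ℕ | ∃ c : Fin n → Euc d, IsFinSepPacking ρ C c ∧ ∀ i, c i ∈ K}

/-- The smallest radius `R > 0` such that a ball of radius `R` contains the centers of
some `ρ`-separable packing of `n` translates of `C`. -/
def RSep {d : ℕ} (ρ : ℝ) (C : Set (Euc d)) (n : ℕ) : ℝ :=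
  sInf {R : ℝ | 0 < R ∧ n ≤ nuSep ρ C (Metric.closedBall (0 : Euc d) R)}

/-- The `j`-th coefficient of the Steiner polynomial `t ↦ vol(K + t B)`, recovered by
Lagrange interpolation at `t = 0, 1, …, d`. -/
def steinerCoeff {d : ℕ} (K : Set (Euc d)) (j : ℕ) : ℝ :=
  (Lagrange.interpolate (Finset.range (d + 1)) (fun k : ℕ => (k : ℝ))
    (fun k : ℕ => (volume (K + (k : ℝ) • Metric.closedBall (0 : Euc d) 1)).toReal)).coeff j

/-- The mean `i`-dimensional projection `M_i(K) = (κ_i/κ_d) V(K[i], B[d-i])`, with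
`M_d(K) = vol_d(K)`.  Here `V(K[i],B[d-i])` is recovered from the Steiner polynomial:
`vol(K + tB) = Σ_j (d choose j) V(K[d-j],B[j]) t^j`. -/
def meanProj {d : ℕ} (i : ℕ) (K : Set (Euc d)) : ℝ :=
  if i = d then (volume K).toReal
  else kappa i / kappa d * (steinerCoeff K (d - i) / (d.choose (d - i)))

/-- Surface area of `Q`: the `(d-1)`-dimensional Hausdorff measure of its boundary. -/
def surfArea {d : ℕ} (Q : Set (Euc d)) : ℝ :=
  (MeasureTheory.Measure.hausdorffMeasure ((d : ℝ) - 1) (frontier Q)).toReal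

end
noncomputable section Aux
open Metric

variable {d : ℕ}

lemma coord_abs_le_norm (x : Euc d) (k : Fin d) : |x k| ≤ ‖x‖ := by
  rw [EuclideanSpace.norm_eq, show |x k| = Real.sqrt (‖x k‖ ^ 2) by
    rw [Real.norm_eq_abs, sq_abs, Real.sqrt_sq_eq_abs]]
  exact Real.sqrt_le_sqrt <| Finset.single_le_sum
    (f := fun i => ‖x i‖ ^ 2) (fun i _ => sq_nonneg _) (Finset.mem_univ k)

lemma translateBody_eq_preimage (c : Euc d) (A : Set (Euc d)) :
    translateBody c A = (fun x => -c + x) ⁻¹' A := by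
  ext x
  constructor
  · rintro ⟨y, hy, rfl⟩; simpa
  · intro hx; exact ⟨-c + x, hx, by simp⟩

lemma mem_translateBody_iff {c x : Euc d} {A : Set (Euc d)} :
    x ∈ translateBody c A ↔ -c + x ∈ A := by rw [translateBody_eq_preimage]; rfl

lemma volume_translateBody (c : Euc d) (A : Set (Euc d)) :
    volume (translateBody c A) = volume A := by
  rw [translateBody_eq_preimage]; exact measure_preimage_add _ _ _

lemma translateBody_translateBody (a b : Euc d) (A : Set (Euc d)) :
    translateBody a (translateBody b A) = translateBody (a + b) A := by
  simp only [translateBody, Set.image_image, add_assoc]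

lemma translateBody_mono (c : Euc d) {A B : Set (Euc d)} (h : A ⊆ B) :
    translateBody c A ⊆ translateBody c B := Set.image_mono h

lemma translateBody_subset_iff (c : Euc d) {A B : Set (Euc d)} :
    translateBody c A ⊆ translateBody c B ↔ A ⊆ B := by
  simp only [translateBody_eq_preimage]
  constructor
  · intro h x hx
    have := h (a := c + x) (by simpa)
    simpa using this
  · exact fun h x hx => h hx

lemma translateBody_inj (c : Euc d) {A B : Set (Euc d)} (h : translateBody c A = translateBody c B) :
    A = B := by
  apply subset_antisymm
  · exact (translateBody_subset_iff c).1 h.le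
  · exact (translateBody_subset_iff c).1 h.ge

lemma interior_translateBody (c : Euc d) (A : Set (Euc d)) :
    interior (translateBody c A) = translateBody c (interior A) := by
  have : translateBody c A = (Homeomorph.addLeft c) '' A := rfl
  rw [this, ← Homeomorph.image_interior]; rfl

lemma interior_halfspace_le (a : ℝ) (k : Fin d) :
    interior {x : Euc d | x k ≤ a} = {x : Euc d | x k < a} := by
  let f : Euc d →L[ℝ] ℝ := EuclideanSpace.proj k
  change interior (f ⁻¹' Set.Iic a) = f ⁻¹' Set.Iio a
  rw [f.interior_preimage, interior_Iic]
  exact fun t => ⟨EuclideanSpace.single k t, by simp [f]⟩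

lemma interior_halfspace_ge (a : ℝ) (k : Fin d) :
    interior {x : Euc d | a ≤ x k} = {x : Euc d | a < x k} := by
  let f : Euc d →L[ℝ] ℝ := EuclideanSpace.proj k
  change interior (f ⁻¹' Set.Ici a) = f ⁻¹' Set.Ioi a
  rw [f.interior_preimage, interior_Ici]
  exact fun t => ⟨EuclideanSpace.single k t, by simp [f]⟩

lemma interior_subset_slab {C : Set (Euc d)} {R : ℝ} (hCR : C ⊆ closedBall 0 R)
    (c : Euc d) (k : Fin d) :
    interior (translateBody c C) ⊆ {x : Euc d | |x k - c k| < R} := by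
  have h1 : translateBody c C ⊆ {x : Euc d | c k - R ≤ x k} ∩ {x : Euc d | x k ≤ c k + R} := by
    rintro _ ⟨z, hz, rfl⟩
    have h2 : ‖z‖ ≤ R := by simpa [dist_zero_right] using hCR hz
    have h3 : |z k| ≤ R := le_trans (coord_abs_le_norm z k) h2
    rw [abs_le] at h3
    have hck : (c + z) k = c k + z k := rfl
    constructor <;> simp only [Set.mem_setOf_eq, hck] <;> linarith [h3.1, h3.2]
  intro x hx
  have := interior_mono h1 hx
  rw [interior_inter, interior_halfspace_ge, interior_halfspace_le] at this
  obtain ⟨ha, hb⟩ := this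
  simp only [Set.mem_setOf_eq] at ha hb ⊢
  rw [abs_lt]; constructor <;> linarith

lemma disjoint_of_coord_far {C : Set (Euc d)} {R : ℝ} (hCR : C ⊆ closedBall 0 R)
    {a b : Euc d} {k : Fin d} (h : 2 * R ≤ |a k - b k|) :
    Disjoint (interior (translateBody a C)) (interior (translateBody b C)) := by
  refine Set.disjoint_left.mpr fun x hxa hxb => ?_
  have h1 := interior_subset_slab hCR a k hxa
  have h2 := interior_subset_slab hCR b k hxb
  simp only [Set.mem_setOf_eq] at h1 h2
  have : |a k - b k| ≤ |x k - a k| + |x k - b k| := by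
    rw [show a k - b k = -(x k - a k) + (x k - b k) by ring]
    exact (abs_add_le _ _).trans (by rw [abs_neg])
  linarith

end Aux

noncomputable section Aux2
open Metric

variable {d : ℕ}

lemma exists_closedBall_subset {C : Set (Euc d)} (hC : IsConvexBody C) (hsymm : C = -C) :
    ∃ η : ℝ, 0 < η ∧ closedBall (0 : Euc d) η ⊆ C := by
  obtain ⟨p, hp⟩ := hC.2.2
  obtain ⟨ε, hε, hball⟩ := Metric.isOpen_iff.1 isOpen_interior p hp
  refine ⟨ε / 2, by positivity, fun x hx => ?_⟩
  have hx' : ‖x‖ ≤ ε / 2 := by simpa [dist_zero_right] using hx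
  have hmem : ∀ y : Euc d, ‖y‖ ≤ ε / 2 → p + y ∈ C := by
    intro y hy
    refine interior_subset (hball ?_)
    rw [mem_ball, dist_eq_norm]
    have : p + y - p = y := by abel
    rw [this]; linarith
  have h1 : p + x ∈ C := hmem x hx'
  have h2 : -p + x ∈ C := by
    have h3 : p + -x ∈ C := hmem (-x) (by rwa [norm_neg])
    have h4 : -(p + -x) ∈ -C := Set.neg_mem_neg.mpr h3
    rw [← hsymm] at h4
    convert h4 using 1
    abel
  have := hC.2.1 h1 h2 (le_of_lt one_half_pos) (le_of_lt one_half_pos) (by norm_num)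
  convert this using 1
  module

lemma circumradius_subset {C : Set (Euc d)} (hC : IsConvexBody C) :
    C ⊆ closedBall 0 (circumradius C) ∧ 0 ≤ circumradius C := by
  obtain ⟨M, hMC⟩ := hC.1.isBounded.subset_closedBall 0
  have hne : {R : ℝ | 0 ≤ R ∧ C ⊆ closedBall 0 R}.Nonempty :=
    ⟨max M 0, le_max_right _ _,
      hMC.trans (closedBall_subset_closedBall (le_max_left _ _))⟩
  constructor
  · intro x hx
    rw [mem_closedBall, dist_zero_right]
    exact le_csInf hne fun R hR => by
      have := hR.2 hx; rwa [mem_closedBall, dist_zero_right] at this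
  · exact le_csInf hne fun R hR => hR.1

lemma eta_le_circumradius {C : Set (Euc d)} (hd : 1 ≤ d) {η : ℝ} (hη : 0 < η)
    (hsub : closedBall (0 : Euc d) η ⊆ C) (hC : IsConvexBody C) : η ≤ circumradius C := by
  have k0 : Fin d := ⟨0, hd⟩
  set v : Euc d := EuclideanSpace.single k0 η with hv
  have hvn : ‖v‖ = η := by rw [hv, EuclideanSpace.norm_single, Real.norm_eq_abs, abs_of_pos hη]
  have hvC : v ∈ C := hsub (by rw [mem_closedBall, dist_zero_right, hvn])
  have := (circumradius_subset hC).1 hvC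
  rw [mem_closedBall, dist_zero_right, hvn] at this
  exact this

lemma circumradius_pos {C : Set (Euc d)} (hd : 1 ≤ d) (hC : IsConvexBody C) (hsymm : C = -C) :
    0 < circumradius C := by
  obtain ⟨η, hη, hsub⟩ := exists_closedBall_subset hC hsymm
  exact lt_of_lt_of_le hη (eta_le_circumradius hd hη hsub hC)

lemma inradius_bounds {C : Set (Euc d)} (hd : 1 ≤ d) (hC : IsConvexBody C) {η : ℝ} (hη : 0 < η)
    (hsub : closedBall (0 : Euc d) η ⊆ C) :
    η ≤ inradius C ∧ BddAbove {r : ℝ | ∃ p, closedBall p r ⊆ C} := by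
  have k0 : Fin d := ⟨0, hd⟩
  set Rc := circumradius C with hRc
  have hCR := (circumradius_subset hC).1
  have hbdd : BddAbove {r : ℝ | ∃ p, closedBall p r ⊆ C} := by
    refine ⟨2 * Rc, fun r hr => ?_⟩
    obtain ⟨p, hp⟩ := hr
    rcases le_or_gt r 0 with h | h
    · have := (circumradius_subset hC).2
      linarith
    · have hpC : p ∈ C := hp (by simp [h.le])
      have hpn : ‖p‖ ≤ Rc := by
        have := hCR hpC; rwa [mem_closedBall, dist_zero_right] at this
      set u : Euc d := EuclideanSpace.single k0 r with hu
      have hun : ‖u‖ = r := by rw [hu, EuclideanSpace.norm_single, Real.norm_eq_abs, abs_of_pos h]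
      have hpu : p + u ∈ C := hp (by rw [mem_closedBall, dist_eq_norm,
        show p + u - p = u by abel, hun])
      have hpun : ‖p + u‖ ≤ Rc := by
        have := hCR hpu; rwa [mem_closedBall, dist_zero_right] at this
      have : r = ‖u‖ := hun.symm
      have h2 : ‖u‖ ≤ ‖p + u‖ + ‖p‖ := by
        have := norm_add_le (p + u) (-p)
        simpa [norm_neg, show p + u + -p = u by abel] using this
      linarith
  exact ⟨le_csSup hbdd ⟨0, hsub⟩, hbdd⟩

lemma kappa_pos : 0 < kappa d := by
  rw [kappa]
  apply ENNReal.toReal_pos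
  · exact (measure_closedBall_pos volume _ one_pos).ne'
  · exact measure_closedBall_lt_top.ne

lemma volume_closedBall_toReal (x : Euc d) {R : ℝ} (hR : 0 ≤ R) :
    (volume (closedBall x R)).toReal = kappa d * R ^ d := by
  rw [Measure.addHaar_closedBall' volume x hR, ENNReal.toReal_mul,
    ENNReal.toReal_ofReal (by positivity), finrank_euclideanSpace_fin, kappa, mul_comm]

lemma volume_closedBall_eq (x : Euc d) {R : ℝ} (hR : 0 ≤ R) :
    volume (closedBall x R) = ENNReal.ofReal (kappa d * R ^ d) := by
  have h1 : volume (closedBall x R) ≠ ⊤ := measure_closedBall_lt_top.ne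
  rw [← volume_closedBall_toReal x hR, ENNReal.ofReal_toReal h1]

lemma kappa_half_inradius_le_vol {C : Set (Euc d)} (hd : 1 ≤ d) (hC : IsConvexBody C)
    (hsymm : C = -C) :
    kappa d * (inradius C / 2) ^ d ≤ (volume C).toReal := by
  obtain ⟨η, hη, hsub⟩ := exists_closedBall_subset hC hsymm
  obtain ⟨hle, hbdd⟩ := inradius_bounds hd hC hη hsub
  have hrpos : 0 < inradius C := lt_of_lt_of_le hη hle
  have hlt : inradius C / 2 < inradius C := by linarith
  have hlt' : inradius C / 2 < sSup {r : ℝ | ∃ p, Metric.closedBall p r ⊆ C} := hlt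
  obtain ⟨rr, hrrmem, hrr⟩ :=
    exists_lt_of_lt_csSup (⟨η, ⟨(0 : Euc d), hsub⟩⟩ : Set.Nonempty {r : ℝ | ∃ p, Metric.closedBall p r ⊆ C}) hlt'
  obtain ⟨p, hp⟩ := hrrmem
  have hrr0 : 0 < rr := lt_of_le_of_lt (by positivity) hrr
  have h1 : (volume (closedBall p rr)).toReal ≤ (volume C).toReal :=
    ENNReal.toReal_mono (hC.1.measure_lt_top.ne) (measure_mono hp)
  rw [volume_closedBall_toReal p hrr0.le] at h1
  refine le_trans ?_ h1
  have := pow_le_pow_left₀ (by positivity : (0:ℝ) ≤ inradius C / 2) hrr.le d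
  nlinarith [kappa_pos (d := d), pow_pos (show (0:ℝ) < inradius C / 2 by positivity) d,
    pow_pos hrr0 d]

lemma inradius_pos {C : Set (Euc d)} (hd : 1 ≤ d) (hC : IsConvexBody C) (hsymm : C = -C) :
    0 < inradius C := by
  obtain ⟨η, hη, hsub⟩ := exists_closedBall_subset hC hsymm
  exact lt_of_lt_of_le hη (inradius_bounds hd hC hη hsub).1

end Aux2

noncomputable section Aux3
open Metric

variable {d : ℕ}

lemma cubeW_eq (lam : ℝ) : cubeW d lam =
    ((MeasurableEquiv.toLp 2 (Fin d → ℝ)).symm) ⁻¹' (Set.univ.pi fun _ => Set.Icc (-lam) lam) := by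
  ext x
  simp [cubeW, abs_le, Pi.le_def, forall_and]

lemma volume_cubeW (lam : ℝ) : volume (cubeW d lam) = ENNReal.ofReal (2 * lam) ^ d := by
  rw [cubeW_eq, (EuclideanSpace.volume_preserving_symm_measurableEquiv_toLp _).measure_preimage
    (MeasurableSet.univ_pi fun _ => measurableSet_Icc).nullMeasurableSet, volume_pi_pi]
  simp [Real.volume_Icc]
  ring_nf
  rw [ENNReal.ofReal_mul' (by norm_num), mul_pow, ENNReal.ofReal_ofNat]

lemma volume_cubeW_toReal {lam : ℝ} (h : 0 ≤ lam) :
    (volume (cubeW d lam)).toReal = (2 * lam) ^ d := by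
  rw [volume_cubeW, ENNReal.toReal_pow, ENNReal.toReal_ofReal (by positivity)]

lemma volume_cubeW_ne_top (lam : ℝ) : volume (cubeW d lam) ≠ ⊤ := by
  rw [volume_cubeW]; exact ENNReal.pow_ne_top ENNReal.ofReal_ne_top

lemma measurableSet_cubeW (lam : ℝ) : MeasurableSet (cubeW d lam) := by
  rw [cubeW_eq]
  exact (MeasurableEquiv.toLp 2 (Fin d → ℝ)).symm.measurable
    (MeasurableSet.univ_pi fun _ => measurableSet_Icc)

lemma ratio_nonneg (C Λ : Set (Euc d)) (lam : ℝ) :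
    0 ≤ (volume (⋃ c ∈ {c ∈ Λ | translateBody c C ⊆ cubeW d lam}, translateBody c C)).toReal
      / (volume (cubeW d lam)).toReal := by positivity

lemma ratio_le_one (C Λ : Set (Euc d)) (lam : ℝ) :
    (volume (⋃ c ∈ {c ∈ Λ | translateBody c C ⊆ cubeW d lam}, translateBody c C)).toReal
      / (volume (cubeW d lam)).toReal ≤ 1 := by
  have hU : (⋃ c ∈ {c ∈ Λ | translateBody c C ⊆ cubeW d lam}, translateBody c C) ⊆
      cubeW d lam := Set.iUnion₂_subset fun c hc => hc.2
  rcases eq_or_ne ((volume (cubeW d lam)).toReal) 0 with h | h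
  · rw [h]; simp
  · rw [div_le_one (lt_of_le_of_ne ENNReal.toReal_nonneg (Ne.symm h))]
    exact ENNReal.toReal_mono (volume_cubeW_ne_top lam) (measure_mono hU)

lemma packDensity_nonneg_ratio (C Λ : Set (Euc d)) :
    Filter.IsBoundedUnder (· ≤ ·) Filter.atTop (fun lam : ℝ =>
      (volume (⋃ c ∈ {c ∈ Λ | translateBody c C ⊆ cubeW d lam}, translateBody c C)).toReal
        / (volume (cubeW d lam)).toReal) :=
  Filter.isBoundedUnder_of ⟨1, fun lam => ratio_le_one C Λ lam⟩

lemma packDensity_le_one (C Λ : Set (Euc d)) : packDensity C Λ ≤ 1 := by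
  rw [packDensity]
  apply Filter.limsup_le_of_le
  · have hb : Filter.IsBoundedUnder (· ≥ ·) Filter.atTop (fun lam : ℝ =>
        (volume (⋃ c ∈ {c ∈ Λ | translateBody c C ⊆ cubeW d lam}, translateBody c C)).toReal
          / (volume (cubeW d lam)).toReal) :=
      Filter.isBoundedUnder_of ⟨0, fun lam => ratio_nonneg C Λ lam⟩
    exact hb.isCoboundedUnder_le
  · exact Filter.Eventually.of_forall fun lam => ratio_le_one C Λ lam

lemma ball_subset_interior_translate {C : Set (Euc d)} {η : ℝ}
    (hsub : closedBall (0 : Euc d) η ⊆ C) (c : Euc d) :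
    ball c η ⊆ interior (translateBody c C) := by
  rw [interior_translateBody]
  intro y hy
  rw [mem_translateBody_iff]
  have h0 : ball (0 : Euc d) η ⊆ interior C :=
    interior_maximal (le_trans ball_subset_closedBall hsub) isOpen_ball
  apply h0
  rw [mem_ball, dist_eq_norm, show -c + y - 0 = y - c by abel]
  rwa [mem_ball, dist_eq_norm] at hy

lemma centers_far {C : Set (Euc d)} {η : ℝ} (hη : 0 < η)
    (hsub : closedBall (0 : Euc d) η ⊆ C) {a b : Euc d} (hab : a ≠ b)
    (hdisj : Disjoint (interior (translateBody a C)) (interior (translateBody b C))) :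
    2 * η ≤ dist a b := by
  by_contra h
  push_neg at h
  have h1 : midpoint ℝ a b ∈ ball a η := by
    rw [mem_ball, dist_midpoint_left]
    simp only [Real.norm_ofNat]
    linarith [dist_nonneg (x := a) (y := b)]
  have h2 : midpoint ℝ a b ∈ ball b η := by
    rw [mem_ball, dist_midpoint_right]
    simp only [Real.norm_ofNat]
    linarith [dist_nonneg (x := a) (y := b)]
  exact Set.disjoint_left.mp hdisj
    (ball_subset_interior_translate hsub a h1)
    (ball_subset_interior_translate hsub b h2)

lemma exists_card_bound (M η : ℝ) (hη : 0 < η) :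
    ∃ K : ℕ, ∀ s : Finset (Euc d), (∀ c ∈ s, ‖c‖ ≤ M) →
      (∀ c ∈ s, ∀ c' ∈ s, c ≠ c' → 2 * η ≤ dist c c') → s.card ≤ K := by
  classical
  have htb : TotallyBounded (closedBall (0 : Euc d) M) :=
    (isCompact_closedBall _ _).totallyBounded
  obtain ⟨t, htf, hcov⟩ := Metric.totallyBounded_iff.1 htb η hη
  refine ⟨htf.toFinset.card, fun s hs hsep => ?_⟩
  have hchoice : ∀ c : Euc d, c ∈ s → ∃ y, y ∈ htf.toFinset ∧ c ∈ ball y η := by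
    intro c hc
    have : c ∈ ⋃ y ∈ t, ball y η :=
      hcov (by rw [mem_closedBall, dist_zero_right]; exact hs c hc)
    simp only [Set.mem_iUnion, exists_prop] at this
    obtain ⟨y, hy, hcy⟩ := this
    exact ⟨y, htf.mem_toFinset.2 hy, hcy⟩
  set f : Euc d → Euc d := fun c =>
    if h : ∃ y, y ∈ htf.toFinset ∧ c ∈ ball y η then h.choose else 0 with hf
  apply Finset.card_le_card_of_injOn f
  · intro c hc
    have h := hchoice c hc
    rw [hf]; simp only [dif_pos h]
    exact h.choose_spec.1
  · intro c hc c' hc' hfeq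
    by_contra hne
    have h1 := hchoice c hc
    have h2 := hchoice c' hc'
    have e1 : f c = h1.choose := by rw [hf]; simp only [dif_pos h1]
    have e2 : f c' = h2.choose := by rw [hf]; simp only [dif_pos h2]
    have hb1 : c ∈ ball (f c) η := by rw [e1]; exact h1.choose_spec.2
    have hb2 : c' ∈ ball (f c) η := by rw [hfeq, e2]; exact h2.choose_spec.2
    have : dist c c' < 2 * η := by
      have := dist_triangle c (f c) c'
      rw [mem_ball] at hb1 hb2
      rw [dist_comm (f c) c'] at this
      linarith
    have := hsep c hc c' hc' hne
    linarith

lemma le_nuSep {ρ : ℝ} {C : Set (Euc d)} {η : ℝ} (hη : 0 < η)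
    (hsub : closedBall (0 : Euc d) η ⊆ C) {R : ℝ} {n : ℕ} (c : Fin n → Euc d)
    (hp : IsFinSepPacking ρ C c) (hin : ∀ i, c i ∈ closedBall (0 : Euc d) R) :
    n ≤ nuSep ρ C (closedBall 0 R) := by
  classical
  obtain ⟨K, hK⟩ := exists_card_bound R η hη
  have key : ∀ m : ℕ, (∃ cc : Fin m → Euc d, IsFinSepPacking ρ C cc ∧
      ∀ i, cc i ∈ closedBall (0 : Euc d) R) → m ≤ K := by
    intro m hm
    obtain ⟨cc, hcc, hcin⟩ := hm
    have hinj : Function.Injective cc := by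
      intro i j hij
      by_contra hne
      have hdisj := hcc.1 i j hne
      rw [hij] at hdisj
      have hne' : (interior (translateBody (cc j) C)).Nonempty :=
        ⟨cc j, ball_subset_interior_translate hsub _ (mem_ball_self hη)⟩
      exact hne'.ne_empty (disjoint_self.mp hdisj)
    set s : Finset (Euc d) := Finset.image cc Finset.univ with hs
    have hcard : s.card = m := by
      rw [hs, Finset.card_image_of_injective _ hinj, Finset.card_univ, Fintype.card_fin]
    rw [← hcard]
    apply hK
    · intro x hx
      rw [hs, Finset.mem_image] at hx
      obtain ⟨i, _, rfl⟩ := hx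
      have := hcin i
      rwa [mem_closedBall, dist_zero_right] at this
    · intro x hx y hy hxy
      rw [hs, Finset.mem_image] at hx hy
      obtain ⟨i, _, rfl⟩ := hx
      obtain ⟨j, _, rfl⟩ := hy
      have hij : i ≠ j := fun h => hxy (by rw [h])
      exact centers_far hη hsub hxy (hcc.1 i j hij)
  have hbdd : BddAbove {m : ℕ | ∃ cc : Fin m → Euc d, IsFinSepPacking ρ C cc ∧
      ∀ i, cc i ∈ closedBall (0 : Euc d) R} := ⟨K, fun m hm => key m hm⟩
  exact le_csSup hbdd ⟨c, hp, hin⟩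

end Aux3

noncomputable section Aux4
open Metric

variable {d : ℕ}

def gridSet (d : ℕ) (s : ℝ) : Set (Euc d) := {x | ∀ k, ∃ z : ℤ, x k = s * z}

def gridPt {d : ℕ} (s : ℝ) (z : Fin d → ℤ) : Euc d := WithLp.toLp 2 (fun k => s * (z k : ℝ))

lemma gridPt_mem (s : ℝ) (z : Fin d → ℤ) : gridPt s z ∈ gridSet d s := fun k => ⟨z k, rfl⟩

lemma sep_symm {A B : Set (Euc d)} {F : Set (Set (Euc d))}
    (h : SeparatedByHyperplane A B F) : SeparatedByHyperplane B A F := by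
  obtain ⟨f, t, hf, hA, hB, hF⟩ := h
  refine ⟨-f, -t, neg_ne_zero.2 hf, fun x hx => ?_, fun x hx => ?_, fun S hS x hx => ?_⟩
  · simpa using hB x hx
  · simpa using hA x hx
  · simpa using hF S hS x hx

lemma grid_coord_gap {s : ℝ} (hs : 0 < s) {a b : Euc d} (ha : a ∈ gridSet d s)
    (hb : b ∈ gridSet d s) (hab : a ≠ b) : ∃ k, s ≤ |a k - b k| := by
  have hex : ∃ k, a k ≠ b k := by
    by_contra h; push_neg at h; exact hab ((WithLp.ext_iff 2).2 (funext h))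
  obtain ⟨k, hk⟩ := hex
  obtain ⟨za, hza⟩ := ha k
  obtain ⟨zb, hzb⟩ := hb k
  refine ⟨k, ?_⟩
  rw [hza, hzb] at hk ⊢
  have hz : za ≠ zb := by rintro rfl; exact hk rfl
  rw [← mul_sub, abs_mul, abs_of_pos hs, ← Int.cast_sub]
  have h1 : (1 : ℝ) ≤ |((za - zb : ℤ) : ℝ)| := by
    rw [← Int.cast_abs]
    exact_mod_cast Int.one_le_abs (sub_ne_zero.2 hz)
  nlinarith

lemma grid_separated {C : Set (Euc d)} {Rc s : ℝ} (hCR : C ⊆ closedBall 0 Rc)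
    (hRc : 0 ≤ Rc) (h2Rs : 2 * Rc ≤ s) {a b : Euc d} (ha : a ∈ gridSet d s)
    (hb : b ∈ gridSet d s) {k : Fin d} (hk : a k + s ≤ b k)
    {F : Set (Set (Euc d))} (hF : ∀ S ∈ F, ∃ cS ∈ gridSet d s, S = translateBody cS C) :
    SeparatedByHyperplane (translateBody a C) (translateBody b C) F := by
  refine ⟨EuclideanSpace.proj k, a k + s / 2, ?_, ?_, ?_, ?_⟩
  · intro h
    have h1 : (EuclideanSpace.proj k : Euc d →L[ℝ] ℝ) (EuclideanSpace.single k 1) = 1 := by simp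
    rw [h] at h1
    simp at h1
  · rintro x ⟨z, hz, rfl⟩
    have h3 : |z k| ≤ Rc :=
      le_trans (coord_abs_le_norm z k) (by simpa [dist_zero_right] using hCR hz)
    rw [abs_le] at h3
    show (a + z) k ≤ a k + s / 2
    have he : (a + z) k = a k + z k := rfl
    rw [he]
    linarith [h3.2]
  · rintro x ⟨z, hz, rfl⟩
    have h3 : |z k| ≤ Rc :=
      le_trans (coord_abs_le_norm z k) (by simpa [dist_zero_right] using hCR hz)
    rw [abs_le] at h3
    show a k + s / 2 ≤ (b + z) k
    have he : (b + z) k = b k + z k := rfl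
    rw [he]
    linarith [h3.1]
  · intro S hS x hx
    obtain ⟨cS, hcS, rfl⟩ := hF S hS
    have hslab := interior_subset_slab hCR cS k hx
    simp only [Set.mem_setOf_eq] at hslab
    obtain ⟨za, hza⟩ := ha k
    obtain ⟨zc, hzc⟩ := hcS k
    show x k ≠ a k + s / 2
    intro heq
    rw [heq, hza, hzc] at hslab
    have key : s / 2 ≤ |s * za + s / 2 - s * zc| := by
      have hs0 : 0 ≤ s := by linarith
      rcases le_or_gt zc za with h | h
      · have hle : (zc : ℝ) ≤ za := by exact_mod_cast h
        rw [abs_of_nonneg (by nlinarith)]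
        nlinarith
      · have hle : (za : ℝ) + 1 ≤ zc := by exact_mod_cast h
        rw [abs_of_nonpos (by nlinarith)]
        nlinarith
    rw [hza] at heq
    have hRc2 : Rc ≤ s / 2 := by linarith
    linarith

lemma grid_isSepPacking {C : Set (Euc d)} {ρ : ℝ} (hd : 1 ≤ d) (hρ : 1 ≤ ρ)
    (hC : IsConvexBody C) (hsymm : C = -C) :
    IsSepPacking ρ C (gridSet d (2 * ρ * circumradius C)) := by
  set Rc := circumradius C with hRcdef
  have hCR : C ⊆ closedBall 0 Rc := (circumradius_subset hC).1
  have hRc0 : 0 < Rc := circumradius_pos hd hC hsymm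
  set s := 2 * ρ * Rc with hsdef
  have hs : 0 < s := by nlinarith
  have h2Rs : 2 * Rc ≤ s := by nlinarith
  constructor
  · intro a ha b hb hab
    obtain ⟨k, hk⟩ := grid_coord_gap hs ha hb hab
    exact disjoint_of_coord_far hCR (le_trans h2Rs hk)
  · intro c hc A hA B hB hAB
    obtain ⟨a, ha, haA, hsubA⟩ := hA
    obtain ⟨b, hb, hbB, hsubB⟩ := hB
    subst haA; subst hbB
    have hab : a ≠ b := fun h => hAB (by rw [h])
    have hFspec : ∀ S ∈ {S | ∃ c' ∈ gridSet d s, S = translateBody c' C ∧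
        S ⊆ translateBody c (ρ • C)}, ∃ cS ∈ gridSet d s, S = translateBody cS C := by
      rintro S ⟨c', hc', hS, _⟩
      exact ⟨c', hc', hS⟩
    obtain ⟨k, hk⟩ := grid_coord_gap hs ha hb hab
    rcases le_or_gt (a k + s) (b k) with h | h
    · exact grid_separated hCR hRc0.le h2Rs ha hb h hFspec
    · have h2 : b k + s ≤ a k := by
        rcases abs_cases (a k - b k) with ⟨he, _⟩ | ⟨he, _⟩ <;> rw [he] at hk <;> linarith
      exact sep_symm (grid_separated hCR hRc0.le h2Rs hb ha h2 hFspec)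

lemma volume_interior_translateBody {C : Set (Euc d)} (hC : IsConvexBody C) (c : Euc d) :
    volume (interior (translateBody c C)) = volume C := by
  rw [interior_translateBody, volume_translateBody]
  have hfr : volume (frontier C) = 0 := hC.2.1.addHaar_frontier volume
  apply le_antisymm (measure_mono interior_subset)
  calc volume C ≤ volume (interior C ∪ frontier C) := by
        apply measure_mono
        intro x hx
        rw [← closure_eq_interior_union_frontier]
        exact subset_closure hx
    _ ≤ volume (interior C) + volume (frontier C) := measure_union_le _ _
    _ = volume (interior C) := by rw [hfr, add_zero]

lemma volC_pos {C : Set (Euc d)} (hC : IsConvexBody C) (hsymm : C = -C) :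
    0 < (volume C).toReal := by
  obtain ⟨η, hη, hsub⟩ := exists_closedBall_subset hC hsymm
  apply ENNReal.toReal_pos _ hC.1.measure_lt_top.ne
  intro h0
  have := measure_mono hsub (μ := volume)
  rw [h0] at this
  have hpos := measure_closedBall_pos volume (0 : Euc d) hη
  exact absurd (le_antisymm this zero_le) hpos.ne'

lemma translateBody_subset_cubeW {C : Set (Euc d)} {Rc : ℝ} (hCR : C ⊆ closedBall 0 Rc)
    {c : Euc d} {L : ℝ} (hc : ∀ k, |c k| + Rc ≤ L) : translateBody c C ⊆ cubeW d L := by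
  rintro _ ⟨z, hz, rfl⟩ k
  have h3 : |z k| ≤ Rc :=
    le_trans (coord_abs_le_norm z k) (by simpa [dist_zero_right] using hCR hz)
  show |(c + z) k| ≤ L
  have he : (c + z) k = c k + z k := rfl
  rw [he]
  calc |c k + z k| ≤ |c k| + |z k| := abs_add_le _ _
    _ ≤ L := by linarith [hc k]

lemma grid_density {C : Set (Euc d)} (hC : IsConvexBody C) (hsymm : C = -C) {s : ℝ}
    (hs : 0 < s) (h2Rs : 2 * circumradius C ≤ s) :
    (volume C).toReal / (2 * s) ^ d ≤ packDensity C (gridSet d s) := by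
  classical
  set Rc := circumradius C with hRcdef
  have hCR : C ⊆ closedBall 0 Rc := (circumradius_subset hC).1
  have hRc0 : 0 ≤ Rc := (circumradius_subset hC).2
  rw [packDensity]
  apply Filter.le_limsup_of_frequently_le _ (packDensity_nonneg_ratio C (gridSet d s))
  apply Filter.Eventually.frequently
  filter_upwards [Filter.eventually_ge_atTop (2 * Rc + s)] with L hL
  have hL0 : 0 < L := by linarith
  -- count grid points
  set M : ℕ := ⌊(L - Rc) / s⌋₊ with hM
  have hMle : (M : ℝ) * s ≤ L - Rc := by
    have := Nat.floor_le (div_nonneg (by linarith) hs.le : (0:ℝ) ≤ (L - Rc) / s)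
    calc (M : ℝ) * s ≤ (L - Rc) / s * s := by nlinarith
      _ = L - Rc := by field_simp
  have hMgt : (L - Rc) / s - 1 < (M : ℝ) := Nat.sub_one_lt_floor _
  set zbox : Finset (Fin d → ℤ) :=
    Fintype.piFinset (fun _ : Fin d => Finset.Icc (-(M : ℤ)) (M : ℤ)) with hzbox
  have hcard : zbox.card = (2 * M + 1) ^ d := by
    rw [hzbox, Fintype.card_piFinset]
    simp [Int.card_Icc]
    congr 1
    omega
  -- each grid point's translate is inside the cube
  have hfit : ∀ z ∈ zbox, translateBody (gridPt s z) C ⊆ cubeW d L := by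
    intro z hz
    apply translateBody_subset_cubeW hCR
    intro k
    have hzk : |z k| ≤ (M : ℤ) := by
      rw [hzbox, Fintype.mem_piFinset] at hz
      have := hz k
      rw [Finset.mem_Icc] at this
      rw [abs_le]; exact this
    have : |gridPt s z k| ≤ (M : ℝ) * s := by
      have he : gridPt s z k = s * (z k : ℝ) := rfl
      rw [he, abs_mul, abs_of_pos hs]
      have : |(z k : ℝ)| ≤ (M : ℝ) := by exact_mod_cast hzk
      nlinarith
    linarith
  -- the union over the box is inside the union in the density
  set U := ⋃ c ∈ {c ∈ gridSet d s | translateBody c C ⊆ cubeW d L}, translateBody c C with hU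
  have hsubU : (⋃ z ∈ zbox, interior (translateBody (gridPt s z) C)) ⊆ U := by
    intro x hx
    rw [Set.mem_iUnion₂] at hx
    obtain ⟨z, hz, hxz⟩ := hx
    rw [hU, Set.mem_iUnion₂]
    exact ⟨gridPt s z, ⟨gridPt_mem s z, hfit z hz⟩, interior_subset hxz⟩
  -- disjointness and volume of the union over the box
  have hdisj : (zbox : Set (Fin d → ℤ)).PairwiseDisjoint
      (fun z => interior (translateBody (gridPt s z) C)) := by
    intro z hz z' hz' hne
    have hgne : gridPt s z ≠ gridPt s z' := by
      intro h
      apply hne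
      funext k
      have hco : s * (z k : ℝ) = s * (z' k : ℝ) := congrArg (fun v : Euc d => v k) h
      have := mul_left_cancel₀ hs.ne' hco
      exact_mod_cast this
    obtain ⟨k, hk⟩ := grid_coord_gap hs (gridPt_mem s z) (gridPt_mem s z') hgne
    exact disjoint_of_coord_far hCR (le_trans h2Rs hk)
  have hvol : volume (⋃ z ∈ zbox, interior (translateBody (gridPt s z) C)) =
      zbox.card • volume C := by
    rw [measure_biUnion_finset hdisj (fun z _ => isOpen_interior.measurableSet)]
    rw [Finset.sum_congr rfl (fun z _ => volume_interior_translateBody hC (gridPt s z))]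
    rw [Finset.sum_const]
  -- conclude the ratio bound
  have hUfin : volume U ≠ ⊤ := by
    apply ne_top_of_le_ne_top (volume_cubeW_ne_top L)
    exact measure_mono (Set.iUnion₂_subset fun c hc => hc.2)
  have hlower : (zbox.card : ℝ) * (volume C).toReal ≤ (volume U).toReal := by
    have h1 : zbox.card • volume C ≤ volume U := hvol ▸ measure_mono hsubU
    have := ENNReal.toReal_mono hUfin h1
    rwa [nsmul_eq_mul, ENNReal.toReal_mul, ENNReal.toReal_natCast] at this
  rw [volume_cubeW_toReal hL0.le]
  rw [div_le_div_iff₀ (by positivity) (by positivity)]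
  have hVpos := volC_pos hC hsymm
  have hmul := mul_lt_mul_of_pos_right hMgt hs
  rw [sub_mul, div_mul_cancel₀ _ hs.ne', one_mul] at hmul
  have hcount : L ≤ (2 * (M : ℝ) + 1) * s := by nlinarith
  calc (volume C).toReal * (2 * L) ^ d
      ≤ (volume C).toReal * ((2 * (M : ℝ) + 1) * (2 * s)) ^ d := by
        apply mul_le_mul_of_nonneg_left _ hVpos.le
        apply pow_le_pow_left₀ (by positivity)
        nlinarith
    _ = ((2 * (M : ℝ) + 1) ^ d * (volume C).toReal) * (2 * s) ^ d := by
        rw [mul_pow]; ring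
    _ ≤ (volume U).toReal * (2 * s) ^ d := by
        apply mul_le_mul_of_nonneg_right _ (by positivity)
        have hc2 : (2 * (M : ℝ) + 1) ^ d = (zbox.card : ℝ) := by
          rw [hcard]; push_cast; ring
        rw [hc2]
        exact hlower

lemma deltaSep_bddAbove (ρ : ℝ) (C : Set (Euc d)) :
    BddAbove {x | ∃ Λ, IsSepPacking ρ C Λ ∧ x = packDensity C Λ} := by
  refine ⟨1, fun x hx => ?_⟩
  obtain ⟨Λ, _, rfl⟩ := hx
  exact packDensity_le_one C Λ

lemma deltaSep_pos {C : Set (Euc d)} {ρ : ℝ} (hd : 1 ≤ d) (hρ : 1 ≤ ρ)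
    (hC : IsConvexBody C) (hsymm : C = -C) : 0 < deltaSep ρ C := by
  have hRc0 : 0 < circumradius C := circumradius_pos hd hC hsymm
  set s := 2 * ρ * circumradius C with hsdef
  have hs : 0 < s := by nlinarith
  have h2Rs : 2 * circumradius C ≤ s := by nlinarith
  have h1 := grid_density hC hsymm hs h2Rs
  have h2 : packDensity C (gridSet d s) ≤ deltaSep ρ C :=
    le_csSup (deltaSep_bddAbove ρ C) ⟨gridSet d s, grid_isSepPacking hd hρ hC hsymm, rfl⟩
  have h3 : 0 < (volume C).toReal / (2 * s) ^ d := by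
    have := volC_pos hC hsymm
    positivity
  linarith

lemma deltaSep_le_one {C : Set (Euc d)} {ρ : ℝ} (hd : 1 ≤ d) (hρ : 1 ≤ ρ)
    (hC : IsConvexBody C) (hsymm : C = -C) : deltaSep ρ C ≤ 1 := by
  apply csSup_le
  · exact ⟨packDensity C (gridSet d (2 * ρ * circumradius C)),
      gridSet d (2 * ρ * circumradius C), grid_isSepPacking hd hρ hC hsymm, rfl⟩
  · rintro x ⟨Λ, _, rfl⟩
    exact packDensity_le_one C Λ

lemma exists_packing_near {C : Set (Euc d)} {ρ : ℝ} (hd : 1 ≤ d) (hρ : 1 ≤ ρ)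
    (hC : IsConvexBody C) (hsymm : C = -C) {ε : ℝ} (hε : 0 < ε) :
    ∃ Λ, IsSepPacking ρ C Λ ∧ deltaSep ρ C - ε < packDensity C Λ := by
  have hne : {x | ∃ Λ, IsSepPacking ρ C Λ ∧ x = packDensity C Λ}.Nonempty :=
    ⟨packDensity C (gridSet d (2 * ρ * circumradius C)),
      gridSet d (2 * ρ * circumradius C), grid_isSepPacking hd hρ hC hsymm, rfl⟩
  have hlt : deltaSep ρ C - ε < deltaSep ρ C := by linarith
  have hlt' : deltaSep ρ C - ε <
      sSup {x | ∃ Λ, IsSepPacking ρ C Λ ∧ x = packDensity C Λ} := hlt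
  obtain ⟨x, hxmem, hx⟩ := exists_lt_of_lt_csSup hne hlt'
  obtain ⟨Λ, hΛ, rfl⟩ := hxmem
  exact ⟨Λ, hΛ, hx⟩

end Aux4

noncomputable section Aux5
open Metric

variable {d : ℕ}

lemma translateBody_zero (A : Set (Euc d)) : translateBody (0 : Euc d) A = A := by
  rw [translateBody_eq_preimage]
  ext y
  simp

lemma finSepPacking_translate {C : Set (Euc d)} {ρ : ℝ} {Λ : Set (Euc d)}
    (hΛ : IsSepPacking ρ C Λ) {n : ℕ} (t : Fin n → Euc d) (ht : ∀ i, t i ∈ Λ)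
    (hinj : Function.Injective t) (x : Euc d) :
    IsFinSepPacking ρ C (fun i => t i - x) := by
  have etr : ∀ (a : Euc d) (A : Set (Euc d)), translateBody (a - x) A =
      translateBody (-x) (translateBody a A) := by
    intro a A
    rw [translateBody_translateBody]
    congr 1
    abel
  constructor
  · intro i j hij
    have hdisj := hΛ.1 (ht i) (ht j) (fun h => hij (hinj h))
    have e : ∀ a : Euc d, interior (translateBody (a - x) C) =
        translateBody (-x) (interior (translateBody a C)) := by
      intro a
      rw [etr, interior_translateBody]
    rw [e, e]
    exact Set.disjoint_image_of_injective (add_right_injective (-x)) hdisj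
  · intro i A hA B hB hAB
    obtain ⟨j, hAj, hAsub⟩ := hA
    obtain ⟨j', hBj, hBsub⟩ := hB
    set F := {S | ∃ c' ∈ Λ, S = translateBody c' C ∧ S ⊆ translateBody (t i) (ρ • C)}
      with hF
    have htr_mem : ∀ (jj : Fin n) (S : Set (Euc d)), S = translateBody (t jj - x) C →
        S ⊆ translateBody (t i - x) (ρ • C) → translateBody x S ∈ F := by
      intro jj S hSe hSs
      refine ⟨t jj, ht jj, ?_, ?_⟩
      · rw [hSe, etr, translateBody_translateBody,
          show x + -x = (0 : Euc d) by abel, translateBody_zero]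
      · have hmono := translateBody_mono x hSs
        rw [etr (t i) (ρ • C), translateBody_translateBody] at hmono
        rw [show x + -x = (0 : Euc d) by abel, translateBody_zero] at hmono
        exact hmono
    have hsep := hΛ.2 (t i) (ht i)
    have hAm : translateBody x A ∈ F := htr_mem j A hAj hAsub
    have hBm : translateBody x B ∈ F := htr_mem j' B hBj hBsub
    have hne : translateBody x A ≠ translateBody x B := fun h => hAB (translateBody_inj x h)
    obtain ⟨f, τ, hf, h1, h2, h3⟩ := hsep (translateBody x A) hAm (translateBody x B) hBm hne
    refine ⟨f, τ - f x, hf, fun y hy => ?_, fun y hy => ?_, fun S hS y hy => ?_⟩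
    · have hmem : x + y ∈ translateBody x A := ⟨y, hy, rfl⟩
      have := h1 _ hmem
      rw [map_add] at this
      linarith
    · have hmem : x + y ∈ translateBody x B := ⟨y, hy, rfl⟩
      have := h2 _ hmem
      rw [map_add] at this
      linarith
    · obtain ⟨jj, hSe, hSs⟩ := hS
      have hxS : translateBody x S ∈ F := htr_mem jj S hSe hSs
      have hyx : x + y ∈ interior (translateBody x S) := by
        rw [interior_translateBody]
        exact ⟨y, hy, rfl⟩
      have := h3 _ hxS _ hyx
      rw [map_add] at this
      intro hcon
      apply this
      linarith

lemma exists_ball_with_centers {C : Set (Euc d)} (h0 : (0 : Euc d) ∈ C)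
    {T : Finset (Euc d)} {L R : ℝ} (hL : 0 < L) (hR : 0 < R)
    (hT : ∀ c ∈ T, translateBody c C ⊆ cubeW d L)
    {n : ℕ} (hcount : ((n : ℝ) - 1) * (2 * (L + R)) ^ d <
      (T.card : ℝ) * (kappa d * R ^ d)) :
    ∃ x : Euc d, n ≤ (T.filter (fun c => dist c x ≤ R)).card := by
  classical
  rcases Nat.eq_zero_or_pos n with rfl | hn1
  · exact ⟨0, Nat.zero_le _⟩
  by_contra hcon
  push_neg at hcon
  set Q := cubeW d (L + R) with hQ
  have hQmeas : MeasurableSet Q := measurableSet_cubeW _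
  have hQvol : (volume Q).toReal = (2 * (L + R)) ^ d := volume_cubeW_toReal (by positivity)
  have hball : ∀ c ∈ T, closedBall c R ⊆ Q := by
    intro c hc y hy k
    have hcL : c ∈ cubeW d L := hT c hc ⟨0, h0, by simp⟩
    have h1 : |y k - c k| ≤ R := by
      have h3 := coord_abs_le_norm (y - c) k
      have h2 : ‖y - c‖ ≤ R := by rwa [mem_closedBall, dist_eq_norm] at hy
      have he : (y - c) k = y k - c k := rfl
      rw [he] at h3
      linarith
    have h2 : |c k| ≤ L := hcL k
    calc |y k| = |c k + (y k - c k)| := by ring_nf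
      _ ≤ |c k| + |y k - c k| := abs_add_le _ _
      _ ≤ L + R := by linarith
  set g : Euc d → Euc d → ℝ := fun c => (closedBall c R).indicator (fun _ => (1 : ℝ)) with hg
  have hgint : ∀ c ∈ T, IntegrableOn (g c) Q := by
    intro c _
    exact ((integrable_indicator_iff measurableSet_closedBall).2
      (integrableOn_const measure_closedBall_lt_top.ne)).integrableOn
  have hfsum : ∀ x : Euc d, ((T.filter (fun c => dist c x ≤ R)).card : ℝ) =
      ∑ c ∈ T, g c x := by
    intro x
    rw [Finset.card_filter]
    push_cast
    apply Finset.sum_congr rfl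
    intro c _
    by_cases h : dist c x ≤ R
    · rw [if_pos h]
      symm
      apply Set.indicator_of_mem
      rw [mem_closedBall, dist_comm]
      exact h
    · rw [if_neg h]
      symm
      apply Set.indicator_of_notMem
      rw [mem_closedBall, dist_comm]
      exact h
  have hint_each : ∀ c ∈ T, (∫ x in Q, g c x) = kappa d * R ^ d := by
    intro c hc
    rw [hg]
    rw [MeasureTheory.setIntegral_indicator measurableSet_closedBall]
    rw [MeasureTheory.setIntegral_const]
    rw [Set.inter_eq_self_of_subset_right (hball c hc)]
    rw [smul_eq_mul, mul_one]
    exact volume_closedBall_toReal c hR.le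
  have hsum_int : (∫ x in Q, (∑ c ∈ T, g c x)) = (T.card : ℝ) * (kappa d * R ^ d) := by
    rw [MeasureTheory.integral_finset_sum _ (fun c hc => hgint c hc)]
    rw [Finset.sum_congr rfl hint_each, Finset.sum_const, nsmul_eq_mul]
  have hbound : ∀ x : Euc d, (∑ c ∈ T, g c x) ≤ (n : ℝ) - 1 := by
    intro x
    rw [← hfsum]
    have h2 : (T.filter (fun c => dist c x ≤ R)).card + 1 ≤ n := hcon x
    have : ((T.filter (fun c => dist c x ≤ R)).card : ℝ) + 1 ≤ (n : ℝ) := by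
      exact_mod_cast h2
    linarith
  have hmono := MeasureTheory.setIntegral_mono_on
    (MeasureTheory.integrable_finset_sum _ (fun c hc => hgint c hc))
    (integrableOn_const (volume_cubeW_ne_top _))
    hQmeas (fun x _ => hbound x)
  rw [hsum_int, MeasureTheory.setIntegral_const, smul_eq_mul, measureReal_def, hQvol] at hmono
  rw [mul_comm ((2 * (L + R)) ^ d) ((n : ℝ) - 1)] at hmono
  linarith

end Aux5

noncomputable section Aux6
open Metric

variable {d : ℕ}

lemma norm_le_of_mem_cubeW (hd : 1 ≤ d) {L : ℝ} {c : Euc d} (hc : c ∈ cubeW d L) :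
    ‖c‖ ≤ d * L := by
  have hL : 0 ≤ L := by
    have := hc ⟨0, hd⟩
    exact le_trans (abs_nonneg _) this
  rw [EuclideanSpace.norm_eq]
  have h1 : ∑ k : Fin d, ‖c k‖ ^ 2 ≤ (d : ℝ) * L ^ 2 := by
    calc ∑ k : Fin d, ‖c k‖ ^ 2 ≤ ∑ _k : Fin d, L ^ 2 := by
          apply Finset.sum_le_sum
          intro k _
          have := hc k
          rw [Real.norm_eq_abs]
          nlinarith [abs_nonneg (c k)]
      _ = (d : ℝ) * L ^ 2 := by
          rw [Finset.sum_const, Finset.card_univ, Fintype.card_fin, nsmul_eq_mul]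
  have hd2 : (d : ℝ) ≤ (d : ℝ) ^ 2 := by
    have h3 : d ≤ d ^ 2 := Nat.le_self_pow two_ne_zero d
    exact_mod_cast h3
  calc Real.sqrt (∑ k : Fin d, ‖c k‖ ^ 2) ≤ Real.sqrt (((d : ℝ) * L) ^ 2) := by
        apply Real.sqrt_le_sqrt
        nlinarith [sq_nonneg L]
    _ = (d : ℝ) * L := Real.sqrt_sq (by positivity)

lemma packing_finite_in_cube (hd : 1 ≤ d) {C : Set (Euc d)} {Λ : Set (Euc d)} {η : ℝ}
    (hη : 0 < η) (hsub : closedBall (0 : Euc d) η ⊆ C) (hpack : IsPacking C Λ) (L : ℝ) :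
    {c ∈ Λ | translateBody c C ⊆ cubeW d L}.Finite := by
  classical
  have h0C : (0 : Euc d) ∈ C := hsub (mem_closedBall_self hη.le)
  by_contra hinf
  obtain ⟨K, hK⟩ := exists_card_bound ((d : ℝ) * L) η hη
  obtain ⟨tfin, htsub, htcard⟩ := Set.Infinite.exists_subset_card_eq hinf (K + 1)
  have hle := hK tfin ?_ ?_
  · omega
  · intro c hc
    have hcmem := htsub hc
    have hcc : c ∈ cubeW d L := hcmem.2 ⟨0, h0C, by simp⟩
    exact norm_le_of_mem_cubeW hd hcc
  · intro c hc c' hc' hne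
    exact centers_far hη hsub hne (hpack (htsub hc).1 (htsub hc').1 hne)

lemma RSep_witness {C : Set (Euc d)} {ρ : ℝ} (hd : 1 ≤ d) (hρ : 1 ≤ ρ)
    (hC : IsConvexBody C) (hsymm : C = -C) {n : ℕ} {R : ℝ} (hR : 0 < R)
    (hgap : ((n : ℝ) - 1) * (volume C).toReal < deltaSep ρ C * (kappa d * R ^ d)) :
    n ≤ nuSep ρ C (closedBall 0 R) := by
  classical
  obtain ⟨η, hη, hsub⟩ := exists_closedBall_subset hC hsymm
  have h0C : (0 : Euc d) ∈ C := hsub (mem_closedBall_self hη.le)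
  have hV : 0 < (volume C).toReal := volC_pos hC hsymm
  have hκ : 0 < kappa d := kappa_pos
  set V := (volume C).toReal with hVdef
  set δ := deltaSep ρ C with hδdef
  have hδ : 0 < δ := deltaSep_pos hd hρ hC hsymm
  set KR := kappa d * R ^ d with hKRdef
  have hKRpos : 0 < KR := by positivity
  set gp := δ * KR - ((n : ℝ) - 1) * V with hgp
  have hgpp : 0 < gp := by rw [hgp]; linarith
  set ε := min (δ / 2) (gp / (2 * KR)) with hε
  have hεpos : 0 < ε := lt_min (by linarith) (by positivity)
  have hεδ : ε < δ := lt_of_le_of_lt (min_le_left _ _) (by linarith)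
  have hεK : ((n : ℝ) - 1) * V < (δ - ε) * KR := by
    have h1 : ε ≤ gp / (2 * KR) := min_le_right _ _
    have h2 : ε * KR ≤ gp / 2 := by
      calc ε * KR ≤ gp / (2 * KR) * KR := by nlinarith
        _ = gp / 2 := by field_simp
    nlinarith
  obtain ⟨Λ, hΛ, hΛd⟩ := exists_packing_near hd hρ hC hsymm hεpos
  set u : ℝ → ℝ := fun lam =>
    (volume (⋃ c ∈ {c ∈ Λ | translateBody c C ⊆ cubeW d lam}, translateBody c C)).toReal
      / (volume (cubeW d lam)).toReal with hu
  have hpd : packDensity C Λ = Filter.limsup u Filter.atTop := rfl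
  have htend0 : Filter.Tendsto (fun L : ℝ => R / (L + R)) Filter.atTop (nhds 0) :=
    Filter.Tendsto.div_atTop tendsto_const_nhds
      (Filter.tendsto_atTop_add_const_right _ R Filter.tendsto_id)
  have htend1 : Filter.Tendsto (fun L : ℝ => 1 - R / (L + R)) Filter.atTop (nhds 1) := by
    have h2 := htend0.const_sub 1
    simpa using h2
  have htend1' : Filter.Tendsto (fun L : ℝ => L / (L + R)) Filter.atTop (nhds 1) := by
    apply Filter.Tendsto.congr' _ htend1
    filter_upwards [Filter.eventually_gt_atTop 0] with L hL
    have hLR : L + R ≠ 0 := by positivity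
    field_simp
    ring
  have htend : Filter.Tendsto (fun L : ℝ => (δ - ε) * KR * (L / (L + R)) ^ d)
      Filter.atTop (nhds ((δ - ε) * KR)) := by
    have h2 := (htend1'.pow d).const_mul ((δ - ε) * KR)
    simpa using h2
  have hev : ∀ᶠ L in Filter.atTop, ((n : ℝ) - 1) * V <
      (δ - ε) * KR * (L / (L + R)) ^ d := htend.eventually (eventually_gt_nhds hεK)
  have hfreq : ∃ᶠ L in Filter.atTop, δ - ε < u L := by
    apply Filter.frequently_lt_of_lt_limsup
    · have hb : Filter.IsBoundedUnder (· ≥ ·) Filter.atTop u :=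
        Filter.isBoundedUnder_of ⟨0, fun lam => ratio_nonneg C Λ lam⟩
      exact hb.isCoboundedUnder_le
    · rw [← hpd]
      exact hΛd
  obtain ⟨L, hL1, hL2⟩ :=
    (hfreq.and_eventually (hev.and (Filter.eventually_ge_atTop 1))).exists
  obtain ⟨hLev, hLone⟩ := hL2
  have hL0 : (0 : ℝ) < L := by linarith
  have hfin := packing_finite_in_cube hd hη hsub hΛ.1 (C := C) L
  set T := hfin.toFinset with hT
  have hTmem : ∀ c, c ∈ T ↔ c ∈ Λ ∧ translateBody c C ⊆ cubeW d L := by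
    intro c
    rw [hT, Set.Finite.mem_toFinset]
    exact Iff.rfl
  have hNV : (δ - ε) * (2 * L) ^ d < (T.card : ℝ) * V := by
    have hcvol : (0 : ℝ) < (2 * L) ^ d := by positivity
    have hur : (δ - ε) * (2 * L) ^ d <
        (volume (⋃ c ∈ {c ∈ Λ | translateBody c C ⊆ cubeW d L},
          translateBody c C)).toReal := by
      have h3 := hL1
      rw [hu] at h3
      simp only at h3
      rw [volume_cubeW_toReal hL0.le, lt_div_iff₀ hcvol] at h3
      linarith [h3]
    have hUT : (⋃ c ∈ {c ∈ Λ | translateBody c C ⊆ cubeW d L}, translateBody c C) =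
        ⋃ c ∈ T, translateBody c C := by
      rw [← Finset.set_biUnion_coe, hT, Set.Finite.coe_toFinset]
    rw [hUT] at hur
    have hle : volume (⋃ c ∈ T, translateBody c C) ≤ T.card • volume C := by
      calc volume (⋃ c ∈ T, translateBody c C) ≤ ∑ c ∈ T, volume (translateBody c C) :=
          measure_biUnion_finset_le T _
        _ = T.card • volume C := by
          rw [Finset.sum_congr rfl (fun c _ => volume_translateBody c C), Finset.sum_const]
    have hsmul_ne : (T.card • volume C) ≠ ⊤ := by
      rw [nsmul_eq_mul]
      exact ENNReal.mul_ne_top (ENNReal.natCast_ne_top _) hC.1.measure_lt_top.ne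
    have h4 := ENNReal.toReal_mono hsmul_ne hle
    rw [nsmul_eq_mul, ENNReal.toReal_mul, ENNReal.toReal_natCast] at h4
    calc (δ - ε) * (2 * L) ^ d < (volume (⋃ c ∈ T, translateBody c C)).toReal := hur
      _ ≤ (T.card : ℝ) * V := h4
  have hTsub : ∀ c ∈ T, translateBody c C ⊆ cubeW d L := fun c hc => ((hTmem c).1 hc).2
  have hLRne : L + R ≠ 0 := by positivity
  have hpow : (2 * L) ^ d = (L / (L + R)) ^ d * (2 * (L + R)) ^ d := by
    rw [← mul_pow]
    congr 1
    field_simp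
  have hQd : (0 : ℝ) < (2 * (L + R)) ^ d := by positivity
  have step1 : ((n : ℝ) - 1) * V * (2 * (L + R)) ^ d < (δ - ε) * KR * (2 * L) ^ d := by
    calc ((n : ℝ) - 1) * V * (2 * (L + R)) ^ d
        < (δ - ε) * KR * (L / (L + R)) ^ d * (2 * (L + R)) ^ d :=
          mul_lt_mul_of_pos_right hLev hQd
      _ = (δ - ε) * KR * (2 * L) ^ d := by rw [hpow]; ring
  have step2 : (δ - ε) * (2 * L) ^ d * KR < ((T.card : ℝ) * V) * KR :=
    mul_lt_mul_of_pos_right hNV hKRpos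
  have hcount : ((n : ℝ) - 1) * (2 * (L + R)) ^ d < (T.card : ℝ) * KR := by
    have h3 : ((n : ℝ) - 1) * (2 * (L + R)) ^ d * V < ((T.card : ℝ) * KR) * V := by
      nlinarith
    exact (mul_lt_mul_iff_of_pos_right hV).mp h3
  obtain ⟨x, hx⟩ := exists_ball_with_centers h0C hL0 hR hTsub hcount
  obtain ⟨T'', hT''sub, hT''card⟩ := Finset.exists_subset_card_eq hx
  have e : {y // y ∈ T''} ≃ Fin n := T''.equivFin.trans (finCongr hT''card)
  set t : Fin n → Euc d := fun i => ((e.symm i : {y // y ∈ T''}) : Euc d) with ht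
  have htinj : Function.Injective t := by
    intro i j hij
    have h2 : e.symm i = e.symm j := Subtype.ext hij
    simpa using congrArg e h2
  have htT : ∀ i, t i ∈ T'' := fun i => (e.symm i).2
  have htfil : ∀ i, t i ∈ T ∧ dist (t i) x ≤ R := by
    intro i
    have h3 := hT''sub (htT i)
    rw [Finset.mem_filter] at h3
    exact h3
  have htΛ : ∀ i, t i ∈ Λ := fun i => ((hTmem _).1 (htfil i).1).1
  have hfsp := finSepPacking_translate hΛ t htΛ htinj x
  apply le_nuSep hη hsub _ hfsp
  intro i
  simp only [mem_closedBall, dist_zero_right]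
  rw [← dist_eq_norm]
  exact (htfil i).2

end Aux6

/-- For `n ≥ 4^d δ_sep(ρ,C) ρ^d R(C)^d / r(C)^d` and `R = R_C(ρ, n)`:
`R + ρR(C) ≤ (vol(C)·n/(δ_sep(ρ,C)·κ_d))^{1/d} (1 + 2δ_sep(ρ,C)^{1/d} ρR(C)/(r(C) n^{1/d}))`. -/
theorem stmt11 {d n : ℕ} (hd : 2 ≤ d) (ρ : ℝ) (hρ : 1 ≤ ρ)
    (C : Set (Euc d)) (hC : IsConvexBody C) (hsymm : C = -C)
    (hn : (4 : ℝ) ^ d * deltaSep ρ C * ρ ^ d * circumradius C ^ d / inradius C ^ d ≤ n) :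
    RSep ρ C n + ρ * circumradius C ≤
      ((volume C).toReal * n / (deltaSep ρ C * kappa d)) ^ ((1 : ℝ) / d) *
        (1 + 2 * deltaSep ρ C ^ ((1 : ℝ) / d) * ρ * circumradius C / inradius C *
          ((n : ℝ) ^ ((1 : ℝ) / d))⁻¹) := by
  classical
  have hd1 : 1 ≤ d := le_trans one_le_two hd
  have hd0 : (d : ℝ) ≠ 0 := by
    have : 0 < d := lt_of_lt_of_le two_pos hd
    exact_mod_cast this.ne'
  have hρ0 : 0 < ρ := lt_of_lt_of_le one_pos hρ
  set δ := deltaSep ρ C with hδdef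
  set Rc := circumradius C with hRcdef
  set r := inradius C with hrdef
  set V := (volume C).toReal with hVdef
  have hδ : 0 < δ := deltaSep_pos hd1 hρ hC hsymm
  have hRc : 0 < Rc := circumradius_pos hd1 hC hsymm
  have hr : 0 < r := inradius_pos hd1 hC hsymm
  have hκ : 0 < kappa d := kappa_pos
  have hV : 0 < V := volC_pos hC hsymm
  have hn1 : 1 ≤ n := by
    rcases Nat.eq_zero_or_pos n with rfl | h
    · exfalso
      have hpos : (0 : ℝ) < 4 ^ d * δ * ρ ^ d * Rc ^ d / r ^ d :=
        div_pos (mul_pos (mul_pos (mul_pos (pow_pos (by norm_num) d) hδ)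
          (pow_pos hρ0 d)) (pow_pos hRc d)) (pow_pos hr d)
      norm_num at hn
      linarith
    · exact h
  have hnpos : (0 : ℝ) < n := by exact_mod_cast hn1
  set T0 := (((n : ℝ) - 1) * V / (δ * kappa d)) ^ ((1 : ℝ) / d) with hT0
  have hbase : (0 : ℝ) ≤ ((n : ℝ) - 1) * V / (δ * kappa d) := by
    apply div_nonneg _ (by positivity)
    have : (1 : ℝ) ≤ (n : ℝ) := by exact_mod_cast hn1
    nlinarith
  have hT0nn : 0 ≤ T0 := Real.rpow_nonneg hbase _
  have key : RSep ρ C n ≤ T0 := by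
    apply le_of_forall_pos_le_add
    intro ε hε
    set R := T0 + ε with hRdef
    have hRpos : 0 < R := by rw [hRdef]; linarith
    have hTR : ((n : ℝ) - 1) * V / (δ * kappa d) < R ^ d := by
      have hlt : T0 < R := by rw [hRdef]; linarith
      have h1 : T0 ^ d < R ^ d := pow_lt_pow_left₀ hlt hT0nn (by omega)
      have h2 : T0 ^ d = ((n : ℝ) - 1) * V / (δ * kappa d) := by
        rw [hT0, ← Real.rpow_natCast ((((n : ℝ) - 1) * V / (δ * kappa d)) ^ ((1 : ℝ) / d)) d,
          ← Real.rpow_mul hbase, one_div, inv_mul_cancel₀ hd0, Real.rpow_one]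
      linarith [h2 ▸ h1]
    have hgap : ((n : ℝ) - 1) * V < δ * (kappa d * R ^ d) := by
      rw [div_lt_iff₀ (by positivity)] at hTR
      have he : R ^ d * (δ * kappa d) = δ * (kappa d * R ^ d) := by ring
      linarith [hTR, he]
    have hnu := RSep_witness hd1 hρ hC hsymm hRpos hgap
    have hmem : R ∈ {R : ℝ | 0 < R ∧ n ≤ nuSep ρ C (Metric.closedBall 0 R)} := ⟨hRpos, hnu⟩
    have hinf := csInf_le ⟨0, fun y hy => hy.1.le⟩ hmem
    exact hinf
  set A := (V * n / (δ * kappa d)) ^ ((1 : ℝ) / d) with hA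
  have hT0A : T0 ≤ A := by
    apply Real.rpow_le_rpow hbase _ (by positivity)
    apply div_le_div_of_nonneg_right _ (by positivity)
    nlinarith
  set W := (V / kappa d) ^ ((1 : ℝ) / d) with hW
  have hWr : r / 2 ≤ W := by
    have h1 : kappa d * (r / 2) ^ d ≤ V := kappa_half_inradius_le_vol hd1 hC hsymm
    have h2 : (r / 2) ^ d ≤ V / kappa d := by
      rw [le_div_iff₀ hκ]
      nlinarith
    have h3 : ((r / 2) ^ d : ℝ) ^ ((1 : ℝ) / d) ≤ W :=
      Real.rpow_le_rpow (by positivity) h2 (by positivity)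
    have h4 : ((r / 2) ^ d : ℝ) ^ ((1 : ℝ) / d) = r / 2 := by
      rw [← Real.rpow_natCast (r / 2) d, ← Real.rpow_mul (by positivity),
        mul_one_div, div_self hd0, Real.rpow_one]
    linarith [h3, h4]
  have hAW : A * δ ^ ((1 : ℝ) / d) * (((n : ℝ) ^ ((1 : ℝ) / d))⁻¹) = W := by
    have hninv : (((n : ℝ)) ^ ((1 : ℝ) / d))⁻¹ = ((n : ℝ)⁻¹) ^ ((1 : ℝ) / d) := by
      rw [Real.inv_rpow hnpos.le]
    rw [hA, hninv, ← Real.mul_rpow (by positivity) hδ.le,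
      ← Real.mul_rpow (by positivity) (by positivity), hW]
    congr 1
    field_simp
  calc RSep ρ C n + ρ * Rc ≤ T0 + ρ * Rc := by linarith [key]
    _ ≤ A + ρ * Rc := by linarith [hT0A]
    _ ≤ A + A * (2 * δ ^ ((1 : ℝ) / d) * ρ * Rc / r * (((n : ℝ) ^ ((1 : ℝ) / d))⁻¹)) := by
        have hterm : A * (2 * δ ^ ((1 : ℝ) / d) * ρ * Rc / r * (((n : ℝ) ^ ((1 : ℝ) / d))⁻¹))
            = (2 * ρ * Rc / r) * (A * δ ^ ((1 : ℝ) / d) * (((n : ℝ) ^ ((1 : ℝ) / d))⁻¹)) := by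
          ring
        rw [hterm, hAW]
        have h5 : (2 * ρ * Rc / r) * (r / 2) ≤ (2 * ρ * Rc / r) * W :=
          mul_le_mul_of_nonneg_left hWr (by positivity)
        have h6 : (2 * ρ * Rc / r) * (r / 2) = ρ * Rc := by field_simp
        linarith [h5, h6]
    _ = A * (1 + 2 * δ ^ ((1 : ℝ) / d) * ρ * Rc / r * (((n : ℝ) ^ ((1 : ℝ) / d))⁻¹)) := by
        ring
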